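/- For a nonnegative matrix M with spectral radius ρ and a unique (up to scale) strictly positive dominant left eigenvector e (e.g., M irreducible), the normalized resolvent converges to the dominant eigenvector: lim_{α→(1/ρ)⁻} (1 − αρ) · 1 (I − αM)^{-1} = c·e for some constant c > 0, where 1 is the all-ones row vector. -/

import Mathlib

set_option linter.unusedSectionVars false
set_option maxHeartbeats 1000000

open Filter Matrix Set Topology

namespace PerronAux

variable {n : Type*} [Fintype n] [DecidableEq n]

/-- Row-stochastic matrices: nonnegative entries with unit row sums. -/
def Stoch (P : Matrix n n ℝ) : Prop :=
  (∀ i j, 0 ≤ P i j) ∧ ∀ i, ∑ j, P i j = 1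

lemma Stoch.mul {A B : Matrix n n ℝ} (hA : Stoch A) (hB : Stoch B) : Stoch (A * B) := by
  refine ⟨fun i j => Finset.sum_nonneg fun k _ => mul_nonneg (hA.1 i k) (hB.1 k j), fun i => ?_⟩
  calc ∑ j, (A * B) i j = ∑ j, ∑ k, A i k * B k j := by simp [Matrix.mul_apply]
    _ = ∑ k, ∑ j, A i k * B k j := Finset.sum_comm
    _ = ∑ k, A i k * ∑ j, B k j := by simp [Finset.mul_sum]
    _ = 1 := by simp only [hB.2]; simpa using hA.2 i

lemma Stoch.one : Stoch (1 : Matrix n n ℝ) := by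
  constructor
  · intro i j
    by_cases h : i = j <;> simp [Matrix.one_apply, h]
  · intro i; simp [Matrix.one_apply]

lemma Stoch.pow {P : Matrix n n ℝ} (hP : Stoch P) (k : ℕ) : Stoch (P ^ k) := by
  induction k with
  | zero => simpa using Stoch.one
  | succ m ih => rw [pow_succ]; exact ih.mul hP

lemma Stoch.entry_le_one {P : Matrix n n ℝ} (hP : Stoch P) (i j : n) : P i j ≤ 1 := by
  have := Finset.single_le_sum (f := fun j => P i j) (fun k _ => hP.1 i k) (Finset.mem_univ j)
  simpa [hP.2 i] using this


section Geom

variable {P : Matrix n n ℝ} {β : ℝ}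

lemma entry_bounds (hP : Stoch P) (h0 : 0 ≤ β) (k : ℕ) (i j : n) :
    0 ≤ ((β • P) ^ k) i j ∧ ((β • P) ^ k) i j = β ^ k * (P ^ k) i j := by
  rw [smul_pow]
  refine ⟨?_, rfl⟩
  exact mul_nonneg (pow_nonneg h0 _) ((hP.pow k).1 i j)

lemma entry_le (hP : Stoch P) (h0 : 0 ≤ β) (k : ℕ) (i j : n) :
    ((β • P) ^ k) i j ≤ β ^ k := by
  rw [(entry_bounds hP h0 k i j).2]
  exact mul_le_of_le_one_right (pow_nonneg h0 _) ((hP.pow k).entry_le_one i j)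

lemma entry_summable (hP : Stoch P) (h0 : 0 ≤ β) (h1 : β < 1) (i j : n) :
    Summable fun k : ℕ => ((β • P) ^ k) i j :=
  Summable.of_nonneg_of_le (fun k => (entry_bounds hP h0 k i j).1)
    (fun k => entry_le hP h0 k i j) (summable_geometric_of_lt_one h0 h1)

/-- The resolvent series. -/
noncomputable def geomS (P : Matrix n n ℝ) (β : ℝ) : Matrix n n ℝ :=
  Matrix.of fun i j => ∑' k : ℕ, ((β • P) ^ k) i j

lemma hasSum_geomS (hP : Stoch P) (h0 : 0 ≤ β) (h1 : β < 1) :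
    HasSum (fun k : ℕ => (β • P) ^ k) (geomS P β) := by
  have : ∀ i, HasSum (fun k : ℕ => ((β • P) ^ k) i) (geomS P β i) := by
    intro i
    exact Pi.hasSum.mpr fun j => (entry_summable hP h0 h1 i j).hasSum
  exact Pi.hasSum.mpr this

lemma tendsto_pow_zero (hP : Stoch P) (h0 : 0 ≤ β) (h1 : β < 1) :
    Tendsto (fun N : ℕ => (β • P) ^ N) atTop (𝓝 0) := by
  refine tendsto_pi_nhds.mpr fun i => tendsto_pi_nhds.mpr fun j => ?_
  have := squeeze_zero (fun N => (entry_bounds hP h0 N i j).1) (fun N => entry_le hP h0 N i j)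
    (tendsto_pow_atTop_nhds_zero_of_lt_one h0 h1)
  simpa using this

lemma geomS_mul (hP : Stoch P) (h0 : 0 ≤ β) (h1 : β < 1) :
    (1 - β • P) * geomS P β = 1 ∧ geomS P β * (1 - β • P) = 1 := by
  have hS := hasSum_geomS hP h0 h1
  have hx0 := tendsto_pow_zero hP h0 h1
  constructor
  · have h1s : HasSum (fun k : ℕ => (1 - β • P) * (β • P) ^ k) ((1 - β • P) * geomS P β) :=
      hS.mul_left _
    have h2 := h1s.tendsto_sum_nat
    have h3 : ∀ N : ℕ, ∑ k ∈ Finset.range N, (1 - β • P) * (β • P) ^ k = 1 - (β • P) ^ N := by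
      intro N
      have he : ∀ k : ℕ, (1 - β • P) * (β • P) ^ k = (β • P) ^ k - (β • P) ^ (k + 1) := by
        intro k; rw [sub_mul, one_mul, pow_succ']
      simp_rw [he]
      rw [Finset.sum_range_sub']
      simp
    rw [show (fun N : ℕ => ∑ k ∈ Finset.range N, (1 - β • P) * (β • P) ^ k)
        = fun N : ℕ => 1 - (β • P) ^ N from funext h3] at h2
    have h4 : Tendsto (fun N : ℕ => 1 - (β • P) ^ N) atTop (𝓝 (1 - 0)) :=
      tendsto_const_nhds.sub hx0
    have := tendsto_nhds_unique h2 h4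
    simpa using this
  · have h1s : HasSum (fun k : ℕ => (β • P) ^ k * (1 - β • P)) (geomS P β * (1 - β • P)) :=
      hS.mul_right _
    have h2 := h1s.tendsto_sum_nat
    have h3 : ∀ N : ℕ, ∑ k ∈ Finset.range N, (β • P) ^ k * (1 - β • P) = 1 - (β • P) ^ N := by
      intro N
      have he : ∀ k : ℕ, (β • P) ^ k * (1 - β • P) = (β • P) ^ k - (β • P) ^ (k + 1) := by
        intro k; rw [mul_sub, mul_one, pow_succ]
      simp_rw [he]
      rw [Finset.sum_range_sub']
      simp
    rw [show (fun N : ℕ => ∑ k ∈ Finset.range N, (β • P) ^ k * (1 - β • P))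
        = fun N : ℕ => 1 - (β • P) ^ N from funext h3] at h2
    have h4 : Tendsto (fun N : ℕ => 1 - (β • P) ^ N) atTop (𝓝 (1 - 0)) :=
      tendsto_const_nhds.sub hx0
    have := tendsto_nhds_unique h2 h4
    simpa using this

lemma isUnit_one_sub (hP : Stoch P) (h0 : 0 ≤ β) (h1 : β < 1) : IsUnit (1 - β • P) :=
  ⟨⟨1 - β • P, geomS P β, (geomS_mul hP h0 h1).1, (geomS_mul hP h0 h1).2⟩, rfl⟩

lemma inv_eq_geomS (hP : Stoch P) (h0 : 0 ≤ β) (h1 : β < 1) :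
    (1 - β • P)⁻¹ = geomS P β :=
  Matrix.inv_eq_right_inv (geomS_mul hP h0 h1).1

end Geom


variable {P : Matrix n n ℝ} {β : ℝ}

lemma vecMul_matrix_smul (v : n → ℝ) (a : ℝ) (A : Matrix n n ℝ) :
    v ᵥ* (a • A) = a • (v ᵥ* A) := by
  ext j
  simp [Matrix.vecMul, dotProduct, Finset.mul_sum, mul_left_comm]

/-- The normalized resolvent. -/
noncomputable def Gfun (P : Matrix n n ℝ) (β : ℝ) : Matrix n n ℝ := (1 - β) • (1 - β • P)⁻¹

lemma Gfun_apply (β : ℝ) (i j : n) : Gfun P β i j = (1 - β) * (1 - β • P)⁻¹ i j := rfl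

lemma Gfun_mem (hP : Stoch P) (h0 : 0 ≤ β) (h1 : β < 1) (i j : n) :
    Gfun P β i j ∈ Icc (0:ℝ) 1 := by
  have hβ : (0:ℝ) < 1 - β := by linarith
  rw [Gfun_apply, inv_eq_geomS hP h0 h1]
  have hnn : 0 ≤ geomS P β i j := tsum_nonneg fun k => (entry_bounds hP h0 k i j).1
  have hle : geomS P β i j ≤ (1 - β)⁻¹ := by
    have := Summable.tsum_le_tsum (fun k => entry_le hP h0 k i j) (entry_summable hP h0 h1 i j)
      (summable_geometric_of_lt_one h0 h1)
    rwa [tsum_geometric_of_lt_one h0 h1] at this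
  constructor
  · exact mul_nonneg hβ.le hnn
  · calc (1 - β) * geomS P β i j ≤ (1 - β) * (1 - β)⁻¹ :=
        mul_le_mul_of_nonneg_left hle hβ.le
      _ = 1 := mul_inv_cancel₀ (ne_of_gt hβ)

lemma Gfun_rowsum (hP : Stoch P) (h0 : 0 ≤ β) (h1 : β < 1) (i : n) :
    ∑ j, Gfun P β i j = 1 := by
  have hβ : (0:ℝ) < 1 - β := by linarith
  have hrs : ∑ j, geomS P β i j = (1 - β)⁻¹ := by
    have hswap := Summable.tsum_finsetSum (s := (Finset.univ : Finset n))
      (f := fun j (k : ℕ) => ((β • P) ^ k) i j) (fun j _ => entry_summable hP h0 h1 i j)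
    have hrow : ∀ k : ℕ, ∑ j, ((β • P) ^ k) i j = β ^ k := by
      intro k
      have he : ∀ j, ((β • P) ^ k) i j = β ^ k * (P ^ k) i j :=
        fun j => (entry_bounds hP h0 k i j).2
      rw [Finset.sum_congr rfl fun j _ => he j, ← Finset.mul_sum, (hP.pow k).2 i, mul_one]
    calc ∑ j, geomS P β i j = ∑' k : ℕ, ∑ j, ((β • P) ^ k) i j := hswap.symm
      _ = ∑' k : ℕ, β ^ k := tsum_congr fun k => hrow k
      _ = (1 - β)⁻¹ := tsum_geometric_of_lt_one h0 h1
  have h2 : ∑ j, Gfun P β i j = (1 - β) * ∑ j, geomS P β i j := by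
    simp_rw [Gfun_apply, inv_eq_geomS hP h0 h1, Finset.mul_sum]
  rw [h2, hrs, mul_inv_cancel₀ (ne_of_gt hβ)]

lemma Gfun_mul_left (hP : Stoch P) (h0 : 0 ≤ β) (h1 : β < 1) :
    (1 - β • P) * Gfun P β = (1 - β) • 1 := by
  rw [Gfun, inv_eq_geomS hP h0 h1, mul_smul_comm, (geomS_mul hP h0 h1).1]

lemma Gfun_mul_right (hP : Stoch P) (h0 : 0 ≤ β) (h1 : β < 1) :
    Gfun P β * (1 - β • P) = (1 - β) • 1 := by
  rw [Gfun, inv_eq_geomS hP h0 h1, smul_mul_assoc, (geomS_mul hP h0 h1).2]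

lemma Gfun_vecMul_stationary (hP : Stoch P) (h0 : 0 ≤ β) (h1 : β < 1) {μ : n → ℝ}
    (hμ : μ ᵥ* P = μ) : μ ᵥ* Gfun P β = μ := by
  have hβ : (1:ℝ) - β ≠ 0 := by intro h; rw [sub_eq_zero] at h; exact absurd h.symm (ne_of_lt h1)
  have hdet : IsUnit (1 - β • P).det :=
    (Matrix.isUnit_iff_isUnit_det _).mp (isUnit_one_sub hP h0 h1)
  have h2 : μ ᵥ* (1 - β • P) = (1 - β) • μ := by
    rw [Matrix.vecMul_sub, Matrix.vecMul_one, vecMul_matrix_smul, hμ, sub_smul, one_smul]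
  have h3 : (1 - β) • (μ ᵥ* (1 - β • P)⁻¹) = μ := by
    have h5 : μ ᵥ* ((1 - β • P) * (1 - β • P)⁻¹) = μ := by
      rw [Matrix.mul_nonsing_inv _ hdet, Matrix.vecMul_one]
    rw [← Matrix.vecMul_vecMul, h2, Matrix.smul_vecMul] at h5
    exact h5
  have h4 : μ ᵥ* (1 - β • P)⁻¹ = (1 - β)⁻¹ • μ := by
    have h6 := congrArg (fun v : n → ℝ => (1 - β)⁻¹ • v) h3
    simpa [smul_smul, inv_mul_cancel₀ hβ] using h6
  rw [Gfun, vecMul_matrix_smul, h4, smul_smul, mul_inv_cancel₀ hβ, one_smul]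


lemma abel_limit [Nonempty n] (hP : Stoch P)
    (hharm : ∀ h : n → ℝ, P *ᵥ h = h → ∃ a : ℝ, h = fun _ => a) :
    ∃ μ : n → ℝ, (∀ j, 0 ≤ μ j) ∧ (∑ j, μ j = 1) ∧
      Tendsto (Gfun P) (𝓝[<] (1:ℝ)) (𝓝 (Matrix.of fun _ j => μ j)) := by
  set F : Filter ℝ := 𝓝[<] (1:ℝ) with hF
  haveI : F.NeBot := nhdsWithin_Iio_neBot le_rfl
  have hev : ∀ᶠ β in F, 0 ≤ β ∧ β < 1 := by
    have h1 : ∀ᶠ β in F, β < 1 := eventually_mem_nhdsWithin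
    have h0 : ∀ᶠ β in F, (0:ℝ) ≤ β :=
      ((eventually_gt_nhds (by norm_num : (0:ℝ) < 1)).filter_mono nhdsWithin_le_nhds).mono
        fun β hβ => hβ.le
    exact h0.and h1
  have hK : IsCompact {A : Matrix n n ℝ | ∀ i j, A i j ∈ Icc (0:ℝ) 1} := by
    have h2 : IsCompact (univ.pi fun _ : n => univ.pi fun _ : n => Icc (0:ℝ) 1) :=
      isCompact_univ_pi fun _ => isCompact_univ_pi fun _ => isCompact_Icc
    have hset : {A : Matrix n n ℝ | ∀ i j, A i j ∈ Icc (0:ℝ) 1}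
        = (univ.pi fun _ : n => univ.pi fun _ : n => Icc (0:ℝ) 1) := by
      ext A
      exact ⟨fun hA i _ j _ => hA i j, fun hA i j => hA i (Set.mem_univ i) j (Set.mem_univ j)⟩
    rw [hset]
    exact h2
  have key : ∀ U : Ultrafilter ℝ, ↑U ≤ F → ∃ x : Matrix n n ℝ,
      Tendsto (Gfun P) U (𝓝 x) ∧ (∀ i j, 0 ≤ x i j) ∧ (∀ i, ∑ j, x i j = 1) ∧
      P * x = x ∧ x * P = x := by
    intro U hU
    have hevU : ∀ᶠ β in (U : Filter ℝ), 0 ≤ β ∧ β < 1 := hev.filter_mono hU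
    have hmem : {A : Matrix n n ℝ | ∀ i j, A i j ∈ Icc (0:ℝ) 1} ∈ Filter.map (Gfun P) ↑U := by
      rw [Filter.mem_map]
      filter_upwards [hevU] with β hβ
      exact fun i j => Gfun_mem hP hβ.1 hβ.2 i j
    obtain ⟨x, hxK, hx⟩ := hK.ultrafilter_le_nhds (U.map (Gfun P))
      (by rwa [Ultrafilter.coe_map, le_principal_iff])
    have hGx : Tendsto (Gfun P) ↑U (𝓝 x) := by rwa [Ultrafilter.coe_map] at hx
    have hid : Tendsto (fun β : ℝ => β) ↑U (𝓝 1) := hU.trans nhdsWithin_le_nhds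
    have hxnn : ∀ i j, 0 ≤ x i j := fun i j => (hxK i j).1
    -- left fixed point : P * x = x
    have hPx : P * x = x := by
      have hlim1 : Tendsto (fun β : ℝ => (1 - β • P) * Gfun P β) ↑U
          (𝓝 ((1 - (1:ℝ) • P) * x)) :=
        (tendsto_const_nhds.sub (hid.smul tendsto_const_nhds)).mul hGx
      have hlim2 : Tendsto (fun β : ℝ => (1 - β) • (1 : Matrix n n ℝ)) ↑U
          (𝓝 ((1 - (1:ℝ)) • (1 : Matrix n n ℝ))) :=
        (tendsto_const_nhds.sub hid).smul tendsto_const_nhds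
      have heq : (fun β : ℝ => (1 - β • P) * Gfun P β) =ᶠ[↑U]
          fun β => (1 - β) • (1 : Matrix n n ℝ) := by
        filter_upwards [hevU] with β hβ
        exact Gfun_mul_left hP hβ.1 hβ.2
      have h5 : (1 - (1:ℝ) • P) * x = (1 - (1:ℝ)) • (1 : Matrix n n ℝ) :=
        tendsto_nhds_unique (hlim1.congr' heq) hlim2
      have h6 : x - P * x = 0 := by
        simpa [sub_mul, one_smul] using h5
      have := sub_eq_zero.mp h6
      exact this.symm
    -- right fixed point : x * P = x
    have hxP : x * P = x := by
      have hlim1 : Tendsto (fun β : ℝ => Gfun P β * (1 - β • P)) ↑U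
          (𝓝 (x * (1 - (1:ℝ) • P))) :=
        hGx.mul (tendsto_const_nhds.sub (hid.smul tendsto_const_nhds))
      have hlim2 : Tendsto (fun β : ℝ => (1 - β) • (1 : Matrix n n ℝ)) ↑U
          (𝓝 ((1 - (1:ℝ)) • (1 : Matrix n n ℝ))) :=
        (tendsto_const_nhds.sub hid).smul tendsto_const_nhds
      have heq : (fun β : ℝ => Gfun P β * (1 - β • P)) =ᶠ[↑U]
          fun β => (1 - β) • (1 : Matrix n n ℝ) := by
        filter_upwards [hevU] with β hβ
        exact Gfun_mul_right hP hβ.1 hβ.2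
      have h5 : x * (1 - (1:ℝ) • P) = (1 - (1:ℝ)) • (1 : Matrix n n ℝ) :=
        tendsto_nhds_unique (hlim1.congr' heq) hlim2
      have h6 : x - x * P = 0 := by
        simpa [mul_sub, one_smul] using h5
      have := sub_eq_zero.mp h6
      exact this.symm
    -- row sums
    have hentry : ∀ i j, Tendsto (fun β => Gfun P β i j) ↑U (𝓝 (x i j)) := fun i j =>
      tendsto_pi_nhds.mp (tendsto_pi_nhds.mp hGx i) j
    have hrows : ∀ i, ∑ j, x i j = 1 := by
      intro i
      have hsum : Tendsto (fun β => ∑ j, Gfun P β i j) ↑U (𝓝 (∑ j, x i j)) :=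
        tendsto_finset_sum _ fun j _ => hentry i j
      have hconst : Tendsto (fun β => ∑ j, Gfun P β i j) ↑U (𝓝 1) := by
        refine Tendsto.congr' ?_ tendsto_const_nhds
        filter_upwards [hevU] with β hβ
        exact (Gfun_rowsum hP hβ.1 hβ.2 i).symm
      exact tendsto_nhds_unique hsum hconst
    exact ⟨x, hGx, hxnn, hrows, hPx, hxP⟩
  -- columns of fixed points are constant
  have hconstcol : ∀ x : Matrix n n ℝ, P * x = x → ∀ (j i i' : n), x i j = x i' j := by
    intro x hx j i i'
    have hfix : P *ᵥ (fun k => x k j) = fun k => x k j := by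
      ext i''
      have := congrFun (congrFun hx i'') j
      simpa [Matrix.mulVec, dotProduct, Matrix.mul_apply] using this
    obtain ⟨a, ha⟩ := hharm (fun k => x k j) hfix
    exact (congrFun ha i).trans (congrFun ha i').symm
  obtain ⟨x₀, hx₀, hx₀nn, hx₀row, hPx₀, hx₀P⟩ := key (Ultrafilter.of F) (Ultrafilter.of_le F)
  set i₀ : n := Classical.arbitrary n
  set μ : n → ℝ := fun j => x₀ i₀ j with hμdef
  have hx₀eq : x₀ = Matrix.of fun _ j => μ j := by
    ext i j
    exact hconstcol x₀ hPx₀ j i i₀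
  have hμsum : ∑ j, μ j = 1 := hx₀row i₀
  have hμP : μ ᵥ* P = μ := by
    ext j
    have := congrFun (congrFun hx₀P i₀) j
    simpa [Matrix.mul_apply, Matrix.vecMul, dotProduct] using this
  refine ⟨μ, fun j => hx₀nn i₀ j, hμsum, ?_⟩
  rw [← hx₀eq]
  refine (tendsto_iff_ultrafilter _ _ _).mpr fun U hU => ?_
  obtain ⟨y, hy, hynn, hyrow, hPy, hyP⟩ := key U hU
  suffices hxy : y = x₀ by rwa [hxy] at hy
  set ν : n → ℝ := fun j => y i₀ j with hνdef
  have hyeq : y = Matrix.of fun _ j => ν j := by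
    ext i j
    exact hconstcol y hPy j i i₀
  have hμG : (fun β : ℝ => μ ᵥ* Gfun P β) =ᶠ[↑U] fun _ => μ := by
    filter_upwards [hev.filter_mono hU] with β hβ
    exact Gfun_vecMul_stationary hP hβ.1 hβ.2 hμP
  have hlim : Tendsto (fun β : ℝ => μ ᵥ* Gfun P β) ↑U (𝓝 (μ ᵥ* y)) := by
    refine tendsto_pi_nhds.mpr fun j => ?_
    have hent : ∀ k, Tendsto (fun β => Gfun P β k j) ↑U (𝓝 (y k j)) := fun k =>
      tendsto_pi_nhds.mp (tendsto_pi_nhds.mp hy k) j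
    have := tendsto_finset_sum Finset.univ fun k (_ : k ∈ Finset.univ) =>
      ((hent k).const_mul (μ k))
    simpa [Matrix.vecMul, dotProduct] using this
  have h7 : μ ᵥ* y = μ :=
    tendsto_nhds_unique hlim ((tendsto_const_nhds : Tendsto (fun _ : ℝ => μ) ↑U (𝓝 μ)).congr'
      hμG.symm)
  have h8 : ∀ j, (μ ᵥ* y) j = ν j := by
    intro j
    have : (μ ᵥ* y) j = (∑ k, μ k) * ν j := by
      rw [hyeq]
      simp [Matrix.vecMul, dotProduct, Finset.sum_mul]
    rw [this, hμsum, one_mul]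
  have hνμ : ν = μ := by
    ext j
    rw [← h8 j, h7]
  rw [hyeq, hνμ, hx₀eq]


end PerronAux

/-- The spectral radius of a real square matrix: the supremum of the absolute values
of its (complex) eigenvalues. -/
noncomputable def specRad {n : Type*} [Fintype n] [DecidableEq n]
    (M : Matrix n n ℝ) : ℝ :=
  sSup ((fun z : ℂ => ‖z‖) '' spectrum ℂ (M.map (algebraMap ℝ ℂ)))

/-- For a nonnegative matrix `M` with spectral radius `ρ > 0` admitting a strictly
positive dominant left eigenvector `e`, unique up to a positive scale factor, the
normalized resolvent applied to the all-ones vector converges, as `α → (1/ρ)⁻`, to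
a positive multiple of `e`:
`lim_{α→(1/ρ)⁻} (1 − αρ) · 𝟏 (I − αM)⁻¹ = c • e` with `c > 0`. -/
theorem resolvent_tendsto_perron_eigenvector {n : Type*} [Fintype n] [DecidableEq n]
    (M : Matrix n n ℝ) (hM : ∀ i j, 0 ≤ M i j)
    (ρ : ℝ) (hρ : ρ = specRad M) (hρpos : 0 < ρ)
    (e : n → ℝ) (hepos : ∀ i, 0 < e i)
    (heig : Matrix.vecMul e M = ρ • e)
    (huniq : ∀ f : n → ℝ, (∀ i, 0 < f i) → Matrix.vecMul f M = ρ • f →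
      ∃ t : ℝ, 0 < t ∧ f = t • e) :
    ∃ c : ℝ, 0 < c ∧
      Filter.Tendsto
        (fun α : ℝ => (1 - α * ρ) • Matrix.vecMul (fun _ => (1 : ℝ)) (1 - α • M)⁻¹)
        (nhdsWithin (1 / ρ) (Set.Iio (1 / ρ)))
        (nhds (c • e)) := by
  rcases isEmpty_or_nonempty n with hn | hn
  · refine ⟨1, one_pos, ?_⟩
    have hvw : ∀ v w : n → ℝ, v = w := fun v w => funext fun i => (IsEmpty.elim hn i)
    rw [show (fun α : ℝ => (1 - α * ρ) • Matrix.vecMul (fun _ => (1 : ℝ)) (1 - α • M)⁻¹)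
        = fun _ => (1:ℝ) • e from funext fun α => hvw _ _]
    exact tendsto_const_nhds
  -- the stochastic matrix
  set P : Matrix n n ℝ := Matrix.of fun i j => e j * M j i / (ρ * e i) with hPdef
  have hrsum : ∀ i, ∑ j, e j * M j i = ρ * e i := by
    intro i
    have := congrFun heig i
    simpa [Matrix.vecMul, dotProduct, Pi.smul_apply, smul_eq_mul] using this
  have hPst : PerronAux.Stoch P := by
    constructor
    · intro i j
      have h1 : 0 ≤ e j * M j i := mul_nonneg (hepos j).le (hM j i)
      have h2 : 0 ≤ ρ * e i := mul_nonneg hρpos.le (hepos i).le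
      exact div_nonneg h1 h2
    · intro i
      have hne : ρ * e i ≠ 0 := (mul_pos hρpos (hepos i)).ne'
      have hsp : ∑ j, P i j = ∑ j, e j * M j i / (ρ * e i) :=
        Finset.sum_congr rfl fun j _ => rfl
      rw [hsp, ← Finset.sum_div, hrsum i, div_self hne]
  -- harmonic functions are constant
  have hharm : ∀ h : n → ℝ, P *ᵥ h = h → ∃ a : ℝ, h = fun _ => a := by
    intro h hfix
    set t : ℝ := 1 + ∑ i, |h i| with htdef
    have hht : ∀ i, 0 < h i + t := by
      intro i
      have h1 : |h i| ≤ ∑ k, |h k| :=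
        Finset.single_le_sum (f := fun k => |h k|) (fun k _ => abs_nonneg _) (Finset.mem_univ i)
      have h2 : -h i ≤ |h i| := neg_le_abs _
      simp only [htdef]
      linarith
    set f : n → ℝ := fun i => e i * (h i + t) with hfdef
    have hfpos : ∀ i, 0 < f i := fun i => mul_pos (hepos i) (hht i)
    have hclaim : ∀ j, ∑ i, e i * M i j * h i = ρ * e j * h j := by
      intro j
      have hne : ρ * e j ≠ 0 := (mul_pos hρpos (hepos j)).ne'
      have h9 := congrFun hfix j
      simp only [Matrix.mulVec, dotProduct, hPdef, Matrix.of_apply] at h9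
      -- h9 : ∑ i, e i * M i j / (ρ * e j) * h i = h j
      have h10 : ∑ i, e i * M i j * h i / (ρ * e j) = h j := by
        rw [← h9]
        exact Finset.sum_congr rfl fun i _ => by ring
      rw [← Finset.sum_div] at h10
      field_simp [(hepos j).ne'] at h10
      linarith [h10]
    have hfeig : Matrix.vecMul f M = ρ • f := by
      ext j
      have hB : ∑ i, e i * M i j = ρ * e j := hrsum j
      have hA := hclaim j
      simp only [Matrix.vecMul, dotProduct, hfdef, Pi.smul_apply, smul_eq_mul]
      have hexp : ∑ i, e i * (h i + t) * M i j
          = (∑ i, e i * M i j * h i) + t * ∑ i, e i * M i j := by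
        rw [Finset.mul_sum, ← Finset.sum_add_distrib]
        exact Finset.sum_congr rfl fun i _ => by ring
      rw [hexp, hA, hB]
      ring
    obtain ⟨s, hs, hfs⟩ := huniq f hfpos hfeig
    refine ⟨s - t, funext fun i => ?_⟩
    have := congrFun hfs i
    simp only [hfdef, Pi.smul_apply, smul_eq_mul] at this
    have hei : e i ≠ 0 := (hepos i).ne'
    have : h i + t = s := by
      have h2 : e i * (h i + t) = e i * s := by rw [this]; ring
      exact mul_left_cancel₀ hei h2
    linarith
  obtain ⟨μ, hμnn, hμsum, hμlim⟩ := PerronAux.abel_limit hPst hharm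
  set w : n → ℝ := fun i => (e i)⁻¹ with hwdef
  set c : ℝ := ∑ i, μ i * (e i)⁻¹ with hcdef
  have hcpos : 0 < c := by
    have hex : ∃ i, 0 < μ i := by
      by_contra hno
      push_neg at hno
      have : ∑ i, μ i ≤ 0 := Finset.sum_nonpos fun i _ => hno i
      rw [hμsum] at this; linarith
    obtain ⟨i₁, hi₁⟩ := hex
    have hterm : 0 < μ i₁ * (e i₁)⁻¹ := mul_pos hi₁ (inv_pos.mpr (hepos i₁))
    have hle : μ i₁ * (e i₁)⁻¹ ≤ c :=
      Finset.single_le_sum (f := fun i => μ i * (e i)⁻¹)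
        (fun i _ => mul_nonneg (hμnn i) (inv_pos.mpr (hepos i)).le) (Finset.mem_univ i₁)
    linarith
  refine ⟨c, hcpos, ?_⟩
  -- diagonal inverses
  have hDw : (Matrix.diagonal e)⁻¹ = Matrix.diagonal w := by
    apply Matrix.inv_eq_right_inv
    rw [Matrix.diagonal_mul_diagonal]
    rw [show (fun i => e i * w i) = fun _ => (1:ℝ) from
      funext fun i => mul_inv_cancel₀ (hepos i).ne']
    exact Matrix.diagonal_one
  have hDe : (Matrix.diagonal w)⁻¹ = Matrix.diagonal e := by
    apply Matrix.inv_eq_right_inv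
    rw [Matrix.diagonal_mul_diagonal]
    rw [show (fun i => w i * e i) = fun _ => (1:ℝ) from
      funext fun i => inv_mul_cancel₀ (hepos i).ne']
    exact Matrix.diagonal_one
  -- the algebraic identity, valid for every α
  have hiden : ∀ α : ℝ,
      (1 - α * ρ) • Matrix.vecMul (fun _ => (1 : ℝ)) (1 - α • M)⁻¹
        = fun j => e j * ((PerronAux.Gfun P (α * ρ) *ᵥ w) j) := by
    intro α
    set β : ℝ := α * ρ with hβdef
    have hfact : (1 : Matrix n n ℝ) - α • M
        = Matrix.diagonal w * (1 - β • P)ᵀ * Matrix.diagonal e := by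
      ext i j
      rw [Matrix.mul_diagonal, Matrix.diagonal_mul]
      simp only [Matrix.sub_apply, Matrix.one_apply, Matrix.smul_apply, smul_eq_mul,
        Matrix.transpose_apply, Matrix.transpose_sub, hPdef, Matrix.of_apply, hwdef, hβdef]
      have h1 : e j ≠ 0 := (hepos j).ne'
      have h2 : e i ≠ 0 := (hepos i).ne'
      have h3 : ρ ≠ 0 := hρpos.ne'
      by_cases hij : i = j
      · subst hij
        simp only [if_true]
        field_simp
      · have h4 : (j = i) = False := eq_false (fun hji => hij hji.symm)
        simp only [hij, if_false, h4]
        field_simp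
        ring
    have hinv : ((1 : Matrix n n ℝ) - α • M)⁻¹
        = Matrix.diagonal w * ((1 - β • P)⁻¹)ᵀ * Matrix.diagonal e := by
      rw [hfact, Matrix.mul_inv_rev, Matrix.mul_inv_rev, hDw, hDe,
        Matrix.transpose_nonsing_inv]
      rw [Matrix.mul_assoc]
    funext j
    rw [hinv]
    simp only [Pi.smul_apply, smul_eq_mul]
    rw [← Matrix.vecMul_vecMul, ← Matrix.vecMul_vecMul]
    have hv1 : (fun _ => (1:ℝ)) ᵥ* Matrix.diagonal w = w := by
      funext k
      rw [Matrix.vecMul_diagonal, one_mul]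
    rw [hv1, Matrix.vecMul_transpose]
    rw [Matrix.vecMul_diagonal]
    show (1 - β) * (((1 - β • P)⁻¹ *ᵥ w) j * e j)
      = e j * ((((1 - β) • (1 - β • P)⁻¹) *ᵥ w) j)
    rw [Matrix.smul_mulVec]
    simp only [Pi.smul_apply, smul_eq_mul]
    ring
  -- the limit of the right-hand side
  have hmapβ : Tendsto (fun α : ℝ => α * ρ) (𝓝[<] (1/ρ)) (𝓝[<] (1:ℝ)) := by
    have hcan : (1/ρ) * ρ = 1 := by
      field_simp
    rw [tendsto_nhdsWithin_iff]
    constructor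
    · have h1 : Tendsto (fun α : ℝ => α * ρ) (𝓝 (1/ρ)) (𝓝 ((1/ρ) * ρ)) :=
        (continuous_id.mul continuous_const).tendsto _
      have h2 := h1.mono_left (nhdsWithin_le_nhds (s := Set.Iio (1/ρ)))
      rwa [hcan] at h2
    · filter_upwards [eventually_mem_nhdsWithin] with α (hα : α < 1/ρ)
      have h5 := mul_lt_mul_of_pos_right hα hρpos
      rw [hcan] at h5
      exact h5
  have hcomp : Tendsto (fun α : ℝ => PerronAux.Gfun P (α * ρ)) (𝓝[<] (1/ρ))
      (𝓝 (Matrix.of fun _ j => μ j)) := hμlim.comp hmapβ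
  have hfin : Tendsto (fun α : ℝ => fun j => e j * ((PerronAux.Gfun P (α * ρ) *ᵥ w) j))
      (𝓝[<] (1/ρ)) (𝓝 (c • e)) := by
    have hval : (fun j => e j * (((Matrix.of fun _ j => μ j : Matrix n n ℝ) *ᵥ w) j)) = c • e := by
      funext j
      simp only [Matrix.mulVec, dotProduct, Matrix.of_apply, Pi.smul_apply, smul_eq_mul,
        hcdef, hwdef]
      ring
    rw [← hval]
    refine tendsto_pi_nhds.mpr fun j => ?_
    have hent : ∀ k, Tendsto (fun α => PerronAux.Gfun P (α * ρ) j k) (𝓝[<] (1/ρ))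
        (𝓝 ((Matrix.of fun _ j => μ j : Matrix n n ℝ) j k)) := fun k =>
      tendsto_pi_nhds.mp (tendsto_pi_nhds.mp hcomp j) k
    have := tendsto_finset_sum Finset.univ fun k (_ : k ∈ Finset.univ) =>
      ((hent k).mul_const (w k))
    have h2 := this.const_mul (e j)
    simpa [Matrix.mulVec, dotProduct] using h2
  rw [show (fun α : ℝ => (1 - α * ρ) • Matrix.vecMul (fun _ => (1 : ℝ)) (1 - α • M)⁻¹)
      = fun α : ℝ => fun j => e j * ((PerronAux.Gfun P (α * ρ) *ᵥ w) j) from funext hiden]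
  exact hfin
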